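/- The transformation S permutes the equivalence classes of the tetrahedra T11,...,T17 with respect to the group generated by B11, B12, B13 as follows: there exist integers i, j, k (depending on the pair) such that the image of the vertex set of T11 under S equals the image of the vertex set of T14 under B11^i·B12^j·B13^k; similarly the image of T12 under S is a B11^i·B12^j·B13^k-translate of T15, the image of T13 under S is such a translate of T16, and the image of T17 under S is such a translate of T17 itself. -/

import Mathlib

open Matrix Polynomial

def A1 : Matrix (Fin 4) (Fin 4) ℚ :=
  !![0, 1, 0, 0; 0, 0, 1, 0; 0, 0, 0, 1; 1, -3, 0, 4]

lemma hdetA1 : A1.det ≠ 0 := by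
  simp [A1, Matrix.det_succ_row_zero, Fin.sum_univ_succ]
  simp [Fin.succAbove, Fin.lt_def]

lemma hdetA1sub : (A1 - 1).det ≠ 0 := by
  have h : A1 - 1 = !![-1, 1, 0, 0; 0, -1, 1, 0; 0, 0, -1, 1; 1, -3, 0, 3] := by
    ext i j
    fin_cases i <;> fin_cases j <;>
      simp [A1, Matrix.one_apply, Matrix.vecHead, Matrix.vecTail] <;> norm_num
  rw [h]
  simp [Matrix.det_succ_row_zero, Fin.sum_univ_succ]
  norm_num [Fin.succAbove, Fin.lt_def, Matrix.cons_val_two, Matrix.vecHead, Matrix.vecTail]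

lemma hdetA1add : (A1 + 1).det ≠ 0 := by
  have h : A1 + 1 = !![1, 1, 0, 0; 0, 1, 1, 0; 0, 0, 1, 1; 1, -3, 0, 5] := by
    ext i j
    fin_cases i <;> fin_cases j <;>
      simp [A1, Matrix.one_apply, Matrix.vecHead, Matrix.vecTail] <;> norm_num
  rw [h]
  simp [Matrix.det_succ_row_zero, Fin.sum_univ_succ]
  norm_num [Fin.succAbove, Fin.lt_def, Matrix.cons_val_two, Matrix.vecHead, Matrix.vecTail]

noncomputable def gA1 : GL (Fin 4) ℚ := Matrix.GeneralLinearGroup.mkOfDetNeZero A1 hdetA1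
noncomputable def uA1 : GL (Fin 4) ℚ := Matrix.GeneralLinearGroup.mkOfDetNeZero (A1 - 1) hdetA1sub
noncomputable def vA1 : GL (Fin 4) ℚ := Matrix.GeneralLinearGroup.mkOfDetNeZero (A1 + 1) hdetA1add

noncomputable def B11 : GL (Fin 4) ℚ := (gA1 ^ 2)⁻¹
noncomputable def B12 : GL (Fin 4) ℚ := uA1 ^ 2 * (gA1 ^ 2)⁻¹
noncomputable def B13 : GL (Fin 4) ℚ := uA1 ^ 2 * vA1 * (gA1 ^ 2)⁻¹

def V10 : Fin 4 → ℚ := ![-3, -2, -1, 1]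

/-- `V i j k` is the point `B11^i * B12^j * B13^k` applied to `V10`;
the paper's vertex `V_{1,4i+2j+k}`. -/
noncomputable def V (i j k : ℕ) : Fin 4 → ℚ :=
  ((B11 ^ i * B12 ^ j * B13 ^ k : GL (Fin 4) ℚ) : Matrix (Fin 4) (Fin 4) ℚ).mulVec V10

def S : Matrix (Fin 4) (Fin 4) ℚ :=
  !![4, -16, 17, -3; 3, -11, 11, -2; 3, -8, 6, -1; 6, -8, -2, 1]


-- Auxiliary definitions and lemmas --------------------------------------

def B11m : Matrix (Fin 4) (Fin 4) ℚ := !![9, -4, -11, 3; 3, 0, -4, 1; 1, 0, 0, 0; 0, 1, 0, 0]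
def B12m : Matrix (Fin 4) (Fin 4) ℚ := !![4, -4, -3, 1; 1, 1, -4, 1; 1, -2, 1, 0; 0, 1, -2, 1]
def B13m : Matrix (Fin 4) (Fin 4) ℚ := !![5, -3, -7, 2; 2, -1, -3, 1; 1, -1, -1, 1; 1, -2, -1, 3]
def A2m : Matrix (Fin 4) (Fin 4) ℚ := !![0, 0, 1, 0; 0, 0, 0, 1; 1, -3, 0, 4; 4, -11, -3, 16]
def Nm : Matrix (Fin 4) (Fin 4) ℚ := !![29, -18, -43, 12; 12, -7, -18, 5; 5, -3, -7, 2; 2, -1, -3, 1]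
def Mnegm : Matrix (Fin 4) (Fin 4) ℚ := !![-1, 1, 4, -1; -1, 2, 1, 0; 0, -1, 2, 1; 1, -3, -1, 6]

lemma mv4 (a b c d e f g h i j k l m n o p x0 x1 x2 x3 : ℚ) :
    (!![a,b,c,d;e,f,g,h;i,j,k,l;m,n,o,p]).mulVec ![x0,x1,x2,x3] =
    ![a*x0+b*x1+c*x2+d*x3, e*x0+f*x1+g*x2+h*x3, i*x0+j*x1+k*x2+l*x3, m*x0+n*x1+o*x2+p*x3] := by
  funext r
  fin_cases r <;> simp [Matrix.mulVec, dotProduct, Fin.sum_univ_four] <;> ring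

lemma coe_gA1 : (gA1 : Matrix (Fin 4) (Fin 4) ℚ) = A1 := rfl
lemma coe_uA1 : (uA1 : Matrix (Fin 4) (Fin 4) ℚ) = A1 - 1 := rfl
lemma coe_vA1 : (vA1 : Matrix (Fin 4) (Fin 4) ℚ) = A1 + 1 := rfl

def umM : Matrix (Fin 4) (Fin 4) ℚ := !![-1, 1, 0, 0; 0, -1, 1, 0; 0, 0, -1, 1; 1, -3, 0, 3]
def vmM : Matrix (Fin 4) (Fin 4) ℚ := !![1, 1, 0, 0; 0, 1, 1, 0; 0, 0, 1, 1; 1, -3, 0, 5]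
def um2M : Matrix (Fin 4) (Fin 4) ℚ := !![1, -2, 1, 0; 0, 1, -2, 1; 1, -3, 1, 2; 2, -5, -3, 9]
def um2vM : Matrix (Fin 4) (Fin 4) ℚ := !![1, -1, -1, 1; 1, -2, -1, 3; 3, -8, -2, 11; 11, -30, -8, 42]

lemma uA1m : (uA1 : Matrix (Fin 4) (Fin 4) ℚ) = umM := by
  rw [coe_uA1]
  ext i j
  fin_cases i <;> fin_cases j <;>
    simp [A1, umM, Matrix.one_apply, Matrix.vecHead, Matrix.vecTail] <;> norm_num

lemma hum2 : umM * umM = um2M := by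
  ext i j
  fin_cases i <;> fin_cases j <;>
    simp [umM, um2M, Matrix.mul_apply, Fin.sum_univ_four, Matrix.vecHead, Matrix.vecTail] <;> norm_num

lemma hum2v : um2M * vmM = um2vM := by
  ext i j
  fin_cases i <;> fin_cases j <;>
    simp [um2M, vmM, um2vM, Matrix.mul_apply, Fin.sum_univ_four, Matrix.vecHead, Matrix.vecTail] <;> norm_num

lemma vA1m : (vA1 : Matrix (Fin 4) (Fin 4) ℚ) = vmM := by
  rw [coe_vA1]
  ext i j
  fin_cases i <;> fin_cases j <;>
    simp [A1, vmM, Matrix.one_apply, Matrix.vecHead, Matrix.vecTail] <;> norm_num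

lemma h_A2_B11 : A2m * B11m = 1 := by
  ext i j
  fin_cases i <;> fin_cases j <;>
    simp [A2m, B11m, Matrix.mul_apply, Fin.sum_univ_four, Matrix.one_apply, Matrix.vecHead, Matrix.vecTail] <;> norm_num

lemma h_B11_A2 : B11m * A2m = 1 := by
  ext i j
  fin_cases i <;> fin_cases j <;>
    simp [A2m, B11m, Matrix.mul_apply, Fin.sum_univ_four, Matrix.one_apply, Matrix.vecHead, Matrix.vecTail] <;> norm_num

noncomputable def U1 : GL (Fin 4) ℚ := ⟨A2m, B11m, h_A2_B11, h_B11_A2⟩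

lemma hU1 : gA1 ^ 2 = U1 := by
  apply Units.ext
  show (↑(gA1 ^ 2) : Matrix (Fin 4) (Fin 4) ℚ) = A2m
  rw [Units.val_pow_eq_pow_val, coe_gA1, pow_two]
  ext i j
  fin_cases i <;> fin_cases j <;>
    simp [A1, A2m, Matrix.mul_apply, Fin.sum_univ_four, Matrix.vecHead, Matrix.vecTail] <;> norm_num

lemma coe_B11 : (B11 : Matrix (Fin 4) (Fin 4) ℚ) = B11m := by
  rw [B11, hU1]; rfl

lemma coe_B12 : (B12 : Matrix (Fin 4) (Fin 4) ℚ) = B12m := by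
  rw [B12, hU1]
  show ((uA1^2 : GL (Fin 4) ℚ) : Matrix (Fin 4) (Fin 4) ℚ) * B11m = B12m
  rw [Units.val_pow_eq_pow_val, uA1m, pow_two, hum2]
  ext i j
  fin_cases i <;> fin_cases j <;>
    simp [um2M, B11m, B12m, Matrix.mul_apply, Fin.sum_univ_four, Matrix.vecHead, Matrix.vecTail] <;> norm_num

lemma coe_B13 : (B13 : Matrix (Fin 4) (Fin 4) ℚ) = B13m := by
  rw [B13, hU1]
  show ((uA1^2 * vA1 : GL (Fin 4) ℚ) : Matrix (Fin 4) (Fin 4) ℚ) * B11m = B13m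
  rw [Units.val_mul, Units.val_pow_eq_pow_val, uA1m, vA1m, pow_two, hum2, hum2v]
  ext i j
  fin_cases i <;> fin_cases j <;>
    simp [um2vM, B11m, B13m, Matrix.mul_apply, Fin.sum_univ_four, Matrix.vecHead, Matrix.vecTail] <;> norm_num

lemma h_Mneg_N : Mnegm * Nm = 1 := by
  ext i j
  fin_cases i <;> fin_cases j <;>
    simp [Mnegm, Nm, Matrix.mul_apply, Fin.sum_univ_four, Matrix.one_apply, Matrix.vecHead, Matrix.vecTail] <;> norm_num

lemma h_N_Mneg : Nm * Mnegm = 1 := by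
  ext i j
  fin_cases i <;> fin_cases j <;>
    simp [Mnegm, Nm, Matrix.mul_apply, Fin.sum_univ_four, Matrix.one_apply, Matrix.vecHead, Matrix.vecTail] <;> norm_num

noncomputable def W : GL (Fin 4) ℚ := ⟨Nm, Mnegm, h_N_Mneg, h_Mneg_N⟩

lemma hW : B13 * B11 = W := by
  apply Units.ext
  show (↑(B13 * B11) : Matrix (Fin 4) (Fin 4) ℚ) = Nm
  rw [Units.val_mul, coe_B13, coe_B11]
  ext i j
  fin_cases i <;> fin_cases j <;>
    simp [B11m, B13m, Nm, Matrix.mul_apply, Fin.sum_univ_four, Matrix.vecHead, Matrix.vecTail] <;> norm_num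

lemma coe_Mneg :
    ((B11 ^ (-1 : ℤ) * B12 ^ (0 : ℤ) * B13 ^ (-1 : ℤ) : GL (Fin 4) ℚ) :
      Matrix (Fin 4) (Fin 4) ℚ) = Mnegm := by
  have h1 : B11 ^ (-1 : ℤ) * B12 ^ (0 : ℤ) * B13 ^ (-1 : ℤ) = (B13 * B11)⁻¹ := by
    simp [_root_.zpow_neg, zpow_one, _root_.mul_inv_rev]
  rw [h1, hW]; rfl

lemma Vmat (i j k : ℕ) :
    V i j k = (B11m ^ i * B12m ^ j * B13m ^ k).mulVec ![-3, -2, -1, 1] := by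
  rw [V]
  rw [Units.val_mul, Units.val_mul, Units.val_pow_eq_pow_val, Units.val_pow_eq_pow_val,
    Units.val_pow_eq_pow_val, coe_B11, coe_B12, coe_B13]
  rfl

lemma step13 : B13m.mulVec ![-3, -2, -1, 1] = ![0, 0, 1, 5] := by rw [B13m, mv4]; norm_num
lemma step12 : B12m.mulVec ![-3, -2, -1, 1] = ![0, 0, 0, 1] := by rw [B12m, mv4]; norm_num
lemma step11 : B11m.mulVec ![-3, -2, -1, 1] = ![-5, -4, -3, -2] := by rw [B11m, mv4]; norm_num
lemma step12' : B12m.mulVec ![0, 0, 1, 5] = ![2, 1, 1, 3] := by rw [B12m, mv4]; norm_num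
lemma step11' : B11m.mulVec ![0, 0, 1, 5] = ![4, 1, 0, 0] := by rw [B11m, mv4]; norm_num
lemma step11'' : B11m.mulVec ![0, 0, 0, 1] = ![3, 1, 0, 0] := by rw [B11m, mv4]; norm_num
lemma step11''' : B11m.mulVec ![2, 1, 1, 3] = ![12, 5, 2, 1] := by rw [B11m, mv4]; norm_num

lemma V000 : V 0 0 0 = ![-3, -2, -1, 1] := by
  rw [Vmat]; simp [Matrix.one_mulVec]

lemma V001 : V 0 0 1 = ![0, 0, 1, 5] := by
  rw [Vmat]; simp only [pow_zero, pow_one, one_mul, step13]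

lemma V010 : V 0 1 0 = ![0, 0, 0, 1] := by
  rw [Vmat]; simp only [pow_zero, pow_one, one_mul, mul_one, step12]

lemma V011 : V 0 1 1 = ![2, 1, 1, 3] := by
  rw [Vmat]
  simp only [pow_zero, pow_one, one_mul, ← Matrix.mulVec_mulVec, step13, step12']

lemma V100 : V 1 0 0 = ![-5, -4, -3, -2] := by
  rw [Vmat]; simp only [pow_zero, pow_one, one_mul, mul_one, step11]

lemma V101 : V 1 0 1 = ![4, 1, 0, 0] := by
  rw [Vmat]
  simp only [pow_zero, pow_one, one_mul, mul_one, ← Matrix.mulVec_mulVec, step13, step11']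

lemma V110 : V 1 1 0 = ![3, 1, 0, 0] := by
  rw [Vmat]
  simp only [pow_zero, pow_one, one_mul, mul_one, ← Matrix.mulVec_mulVec, step12, step11'']

lemma V111 : V 1 1 1 = ![12, 5, 2, 1] := by
  rw [Vmat]
  simp only [pow_one, ← Matrix.mulVec_mulVec, step13, step12', step11''']

-- values of S on the vertices
lemma S000 : S.mulVec (V 0 0 0) = ![0, 0, 0, 1] := by rw [V000, S, mv4]; norm_num
lemma S001 : S.mulVec (V 0 0 1) = ![2, 1, 1, 3] := by rw [V001, S, mv4]; norm_num
lemma S010 : S.mulVec (V 0 1 0) = ![-3, -2, -1, 1] := by rw [V010, S, mv4]; norm_num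
lemma S011 : S.mulVec (V 0 1 1) = ![0, 0, 1, 5] := by rw [V011, S, mv4]; norm_num
lemma S100 : S.mulVec (V 1 0 0) = ![-1, 0, 1, 6] := by rw [V100, S, mv4]; norm_num
lemma S101 : S.mulVec (V 1 0 1) = ![0, 1, 4, 16] := by rw [V101, S, mv4]; norm_num
lemma S110 : S.mulVec (V 1 1 0) = ![-4, -2, 1, 10] := by rw [V110, S, mv4]; norm_num
lemma S111 : S.mulVec (V 1 1 1) = ![-1, 1, 7, 29] := by rw [V111, S, mv4]; norm_num

-- values of Mnegm on the vertices
lemma M000 : Mnegm.mulVec (V 0 0 0) = ![-4, -2, 1, 10] := by rw [V000, Mnegm, mv4]; norm_num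
lemma M001 : Mnegm.mulVec (V 0 0 1) = ![-1, 1, 7, 29] := by rw [V001, Mnegm, mv4]; norm_num
lemma M010 : Mnegm.mulVec (V 0 1 0) = ![-1, 0, 1, 6] := by rw [V010, Mnegm, mv4]; norm_num
lemma M011 : Mnegm.mulVec (V 0 1 1) = ![0, 1, 4, 16] := by rw [V011, Mnegm, mv4]; norm_num
lemma M101 : Mnegm.mulVec (V 1 0 1) = ![-3, -2, -1, 1] := by rw [V101, Mnegm, mv4]; norm_num
lemma M111 : Mnegm.mulVec (V 1 1 1) = ![0, 0, 0, 1] := by rw [V111, Mnegm, mv4]; norm_num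

theorem statement8 :
    (∃ i j k : ℤ,
      (fun x => S.mulVec x) '' ({V 0 0 0, V 0 1 0, V 1 0 0, V 1 0 1} : Set (Fin 4 → ℚ)) =
      (fun x => ((B11 ^ i * B12 ^ j * B13 ^ k : GL (Fin 4) ℚ) : Matrix (Fin 4) (Fin 4) ℚ).mulVec x) ''
        ({V 0 1 0, V 0 1 1, V 1 0 1, V 1 1 1} : Set (Fin 4 → ℚ))) ∧
    (∃ i j k : ℤ,
      (fun x => S.mulVec x) '' ({V 0 1 0, V 1 0 0, V 1 0 1, V 1 1 0} : Set (Fin 4 → ℚ)) =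
      (fun x => ((B11 ^ i * B12 ^ j * B13 ^ k : GL (Fin 4) ℚ) : Matrix (Fin 4) (Fin 4) ℚ).mulVec x) ''
        ({V 0 0 0, V 0 1 0, V 0 1 1, V 1 0 1} : Set (Fin 4 → ℚ))) ∧
    (∃ i j k : ℤ,
      (fun x => S.mulVec x) '' ({V 0 1 0, V 1 0 1, V 1 1 0, V 1 1 1} : Set (Fin 4 → ℚ)) =
      (fun x => ((B11 ^ i * B12 ^ j * B13 ^ k : GL (Fin 4) ℚ) : Matrix (Fin 4) (Fin 4) ℚ).mulVec x) ''
        ({V 0 0 0, V 0 0 1, V 0 1 1, V 1 0 1} : Set (Fin 4 → ℚ))) ∧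
    (∃ i j k : ℤ,
      (fun x => S.mulVec x) '' ({V 0 0 0, V 0 0 1, V 0 1 0, V 0 1 1} : Set (Fin 4 → ℚ)) =
      (fun x => ((B11 ^ i * B12 ^ j * B13 ^ k : GL (Fin 4) ℚ) : Matrix (Fin 4) (Fin 4) ℚ).mulVec x) ''
        ({V 0 0 0, V 0 0 1, V 0 1 0, V 0 1 1} : Set (Fin 4 → ℚ))) := by
  refine ⟨⟨-1, 0, -1, ?_⟩, ⟨-1, 0, -1, ?_⟩, ⟨-1, 0, -1, ?_⟩, ⟨0, 0, 0, ?_⟩⟩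
  · rw [coe_Mneg]
    simp only [Set.image_insert_eq, Set.image_singleton, S000, S010, S100, S101,
      M010, M011, M101, M111]
    ext x
    simp only [Set.mem_insert_iff, Set.mem_singleton_iff]
    constructor <;> rintro (rfl | rfl | rfl | rfl) <;> simp
  · rw [coe_Mneg]
    simp only [Set.image_insert_eq, Set.image_singleton, S010, S100, S101, S110,
      M000, M010, M011, M101]
    ext x
    simp only [Set.mem_insert_iff, Set.mem_singleton_iff]
    constructor <;> rintro (rfl | rfl | rfl | rfl) <;> simp
  · rw [coe_Mneg]
    simp only [Set.image_insert_eq, Set.image_singleton, S010, S101, S110, S111,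
      M000, M001, M011, M101]
    ext x
    simp only [Set.mem_insert_iff, Set.mem_singleton_iff]
    constructor <;> rintro (rfl | rfl | rfl | rfl) <;> simp
  · have hone : ((B11 ^ (0 : ℤ) * B12 ^ (0 : ℤ) * B13 ^ (0 : ℤ) : GL (Fin 4) ℚ) :
        Matrix (Fin 4) (Fin 4) ℚ) = 1 := by simp
    rw [hone]
    simp only [Set.image_insert_eq, Set.image_singleton, S000, S001, S010, S011]
    simp only [Matrix.one_mulVec, V000, V001, V010, V011]
    ext x
    simp only [Set.mem_insert_iff, Set.mem_singleton_iff]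
    constructor <;> rintro (rfl | rfl | rfl | rfl) <;> simp
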